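/- Let ρ₁ = ρ₂ = ρ with ρ ∈ (0,1] and μ₁, μ₂ > 0. If either (μ₁μ₂ > 1, R₁ < 0, and H₃ > 0) or (μ₁μ₂ > 1, R₁ > 0, and H₃ < 0), then the set of stable positive equilibria of Kopel's model has exactly one element, where a positive equilibrium (x,y) is stable if every complex eigenvalue λ of the Jacobian matrix J(x,y), which has rows (1−ρ, ρμ₁(1−2y)) and (ρμ₂(1−2x), 1−ρ), satisfies |λ| < 1. -/

import Mathlib

noncomputable section KopelAux

namespace KopelAux

/-- The equilibrium cubic. -/
def Pc (a b x : ℝ) : ℝ := -(a*b^2)*x^3 + 2*a*b^2*x^2 - a*b*(1+b)*x + (a*b-1)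

/-- Product of Jacobian off-diagonal slopes. -/
def mf (a b x : ℝ) : ℝ := a*b*(1-2*x)*(1-2*b*x*(1-x))

def R1c (a b : ℝ) : ℝ := a^2*b^2 - 4*a^2*b - 4*a*b^2 + 18*a*b - 27

def H3c (a b ρ : ℝ) : ℝ :=
  ρ^3*a^3*b^3 - 4*ρ^3*a^3*b^2 - 4*ρ^3*a^2*b^3 + 17*ρ^3*a^2*b^2 + 4*ρ^3*a^2*b
  + 4*ρ^3*a*b^2 - 2*ρ^2*a^2*b^2 - 45*ρ^3*a*b + 8*ρ^2*a^2*b + 8*ρ^2*a*b^2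
  - 36*ρ^2*a*b + 27*ρ^3 - 4*ρ*a*b + 54*ρ^2 + 36*ρ + 8

def qqc (b x : ℝ) : ℝ := b*x^2 - 2*b*x + 1 + b

def quadf (b x y : ℝ) : ℝ := b*y^2 + b*(x-2)*y + qqc b x

def Dc (b x : ℝ) : ℝ := b^2*(x-2)^2 - 4*b*(qqc b x)

def Phic (a b ρ x : ℝ) : ℝ := (4:ℝ)*b^3 + (-4:ℝ)*b^3*ρ + (1:ℝ)*b^3*ρ^2 + (20:ℝ)*a*b^4*ρ + (-20:ℝ)*a*b^4*ρ*x + (-10:ℝ)*a*b^4*ρ^2 + (10:ℝ)*a*b^4*ρ^2*x + (-20:ℝ)*a*b^5*ρ*x + (36:ℝ)*a*b^5*ρ*x^2 + (-16:ℝ)*a*b^5*ρ*x^3 + (10:ℝ)*a*b^5*ρ^2*x + (-18:ℝ)*a*b^5*ρ^2*x^2 + (8:ℝ)*a*b^5*ρ^2*x^3 + (4:ℝ)*a^2*b^4*ρ^2 + (17:ℝ)*a^2*b^5*ρ^2 + (-46:ℝ)*a^2*b^5*ρ^2*x + (28:ℝ)*a^2*b^5*ρ^2*x^2 + (4:ℝ)*a^2*b^6*ρ^2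 + (-50:ℝ)*a^2*b^6*ρ^2*x + (130:ℝ)*a^2*b^6*ρ^2*x^2 + (-124:ℝ)*a^2*b^6*ρ^2*x^3 + (40:ℝ)*a^2*b^6*ρ^2*x^4 + (-4:ℝ)*a^2*b^7*ρ^2*x + (36:ℝ)*a^2*b^7*ρ^2*x^2 + (-100:ℝ)*a^2*b^7*ρ^2*x^3 + (124:ℝ)*a^2*b^7*ρ^2*x^4 + (-72:ℝ)*a^2*b^7*ρ^2*x^5 + (16:ℝ)*a^2*b^7*ρ^2*x^6

def S1c (a b ρ x : ℝ) : ℝ := (8:ℝ)*b^4 + (-4:ℝ)*b^4*ρ + (20:ℝ)*a*b^5*ρ + (-20:ℝ)*a*b^5*ρ*x + (-20:ℝ)*a*b^6*ρ*x + (36:ℝ)*a*b^6*ρ*x^2 + (-16:ℝ)*a*b^6*ρ*x^3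

def S2c (a b ρ x : ℝ) : ℝ := (4:ℝ)*a*b^4*ρ + (-4:ℝ)*a*b^5*ρ + (4:ℝ)*a*b^5*ρ*x

theorem sos_id (a b ρ x : ℝ) :
    16*b^5*Phic a b ρ x = (S1c a b ρ x)^2 + (-(Dc b x))*(S2c a b ρ x)^2 := by
  unfold Phic S1c S2c Dc qqc; ring

theorem factor_id {a b x : ℝ} (hP : Pc a b x = 0) (y : ℝ) :
    Pc a b y = -(a*b)*(y-x)*(quadf b x y) := by
  unfold Pc quadf qqc at *; linear_combination hP

theorem disc_id {a b x : ℝ} (hP : Pc a b x = 0) :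
    R1c a b = a^2 * (quadf b x x)^2 * (Dc b x) := by
  unfold Pc at hP; unfold R1c quadf Dc qqc
  linear_combination ((27:ℝ) + (9:ℝ)*a*b + (-27:ℝ)*a*b*x + (4:ℝ)*a*b^2 + (-27:ℝ)*a*b^2*x + (54:ℝ)*a*b^2*x^2 + (-27:ℝ)*a*b^2*x^3) * hP

theorem c1a_id {a b x : ℝ} (hP : Pc a b x = 0) :
    mf a b x - 1 = -(a*b)*x*(quadf b x x) := by
  unfold Pc at hP; unfold mf quadf qqc
  linear_combination ((1:ℝ)) * hP

theorem c1b_id {a b ρ x : ℝ} (hP : Pc a b x = 0) :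
    b^3 * H3c a b ρ = (2 - ρ + ρ * mf a b x) * Phic a b ρ x := by
  unfold Pc at hP; unfold H3c mf Phic
  linear_combination ((-48:ℝ)*b^3*ρ + (-48:ℝ)*b^3*ρ^2 + (-28:ℝ)*b^3*ρ^3 + (-56:ℝ)*a*b^4*ρ^2 + (96:ℝ)*a*b^4*ρ^2*x + (28:ℝ)*a*b^4*ρ^3 + (16:ℝ)*a*b^4*ρ^3*x + (-8:ℝ)*a*b^5*ρ^2 + (96:ℝ)*a*b^5*ρ^2*x + (-192:ℝ)*a*b^5*ρ^2*x^2 + (96:ℝ)*a*b^5*ρ^2*x^3 + (-4:ℝ)*a*b^5*ρ^3 + (16:ℝ)*a*b^5*ρ^3*x + (-32:ℝ)*a*b^5*ρ^3*x^2 + (16:ℝ)*a*b^5*ρ^3*x^3 + (-8:ℝ)*a^2*b^4*ρ^3 + (-16:ℝ)*a^2*b^5*ρ^3 + (64:ℝ)*a^2*b^5*ρ^3*x + (-64:ℝ)*a^2*b^5*ρ^3*x^2 + (-4:ℝ)*a^2*b^6*ρ^3 + (72:ℝ)*a^2*b^6*ρ^3*x + (-256:ℝ)*a^2*b^6*ρ^3*x^2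 + (320:ℝ)*a^2*b^6*ρ^3*x^3 + (-128:ℝ)*a^2*b^6*ρ^3*x^4 + (8:ℝ)*a^2*b^7*ρ^3*x + (-80:ℝ)*a^2*b^7*ρ^3*x^2 + (264:ℝ)*a^2*b^7*ρ^3*x^3 + (-384:ℝ)*a^2*b^7*ρ^3*x^4 + (256:ℝ)*a^2*b^7*ρ^3*x^5 + (-64:ℝ)*a^2*b^7*ρ^3*x^6) * hP

section Case2

variable {a b ρ x s t : ℝ} (hP : Pc a b x = 0) (hsum : s + t = 2 - x)
  (hprod : b*s*t = qqc b x)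

include hP hsum hprod

theorem c2a_id : mf a b x - 1 = -(a*b^2)*x*(x-s)*(x-t) := by
  unfold Pc at hP; unfold qqc at hprod; unfold mf
  linear_combination ((-1:ℝ)*a*b^2*x^2) * hsum + ((1:ℝ)*a*b*x) * hprod + ((1:ℝ)) * hP

theorem c2b_id : mf a b s - 1 = -(a*b^2)*s*(s-x)*(s-t) := by
  unfold Pc at hP; unfold qqc at hprod; unfold mf
  linear_combination ((-3:ℝ)*a*b^2*s^2 + (2:ℝ)*a*b^2*x*s) * hsum + ((2:ℝ)*a*b*s + (-1:ℝ)*a*b*x) * hprod + ((1:ℝ)) * hP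

theorem c2c_id : mf a b t - 1 = -(a*b^2)*t*(t-x)*(t-s) := by
  unfold Pc at hP; unfold qqc at hprod; unfold mf
  linear_combination ((-2:ℝ)*a*b + (-2:ℝ)*a*b^2 + (-3:ℝ)*a*b^2*t^2 + (2:ℝ)*a*b^2*s*t + (4:ℝ)*a*b^2*x + (2:ℝ)*a*b^2*x*t + (-2:ℝ)*a*b^2*x^2) * hsum + ((4:ℝ)*a*b + (-2:ℝ)*a*b*s + (-3:ℝ)*a*b*x) * hprod + ((1:ℝ)) * hP

theorem c2d_id : H3c a b ρ =
    (2 - ρ + ρ * mf a b x) * ((2 - ρ + ρ * mf a b s) * (2 - ρ + ρ * mf a b t)) := by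
  unfold Pc at hP; unfold qqc at hprod; unfold H3c mf
  linear_combination ((8:ℝ)*a*b*ρ + (-8:ℝ)*a*b*ρ^2 + (2:ℝ)*a*b*ρ^3 + (24:ℝ)*a*b^2*ρ + (8:ℝ)*a*b^2*ρ*t + (16:ℝ)*a*b^2*ρ*t^2 + (8:ℝ)*a*b^2*ρ*s + (-16:ℝ)*a*b^2*ρ*s*t + (16:ℝ)*a*b^2*ρ*s^2 + (-40:ℝ)*a*b^2*ρ*x + (-16:ℝ)*a*b^2*ρ*x*t + (-16:ℝ)*a*b^2*ρ*x*s + (16:ℝ)*a*b^2*ρ*x^2 + (-24:ℝ)*a*b^2*ρ^2 + (-8:ℝ)*a*b^2*ρ^2*t + (-16:ℝ)*a*b^2*ρ^2*t^2 + (-8:ℝ)*a*b^2*ρ^2*s + (16:ℝ)*a*b^2*ρ^2*s*t + (-16:ℝ)*a*b^2*ρ^2*s^2 + (40:ℝ)*a*b^2*ρ^2*x + (16:ℝ)*a*b^2*ρ^2*x*t + (16:ℝ)*a*b^2*ρ^2*x*s + (-16:ℝ)*a*b^2*ρ^2*x^2 + (6:ℝ)*a*b^2*ρ^3 + (2:ℝ)*a*b^2*ρ^3*t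 + (4:ℝ)*a*b^2*ρ^3*t^2 + (2:ℝ)*a*b^2*ρ^3*s + (-4:ℝ)*a*b^2*ρ^3*s*t + (4:ℝ)*a*b^2*ρ^3*s^2 + (-10:ℝ)*a*b^2*ρ^3*x + (-4:ℝ)*a*b^2*ρ^3*x*t + (-4:ℝ)*a*b^2*ρ^3*x*s + (4:ℝ)*a*b^2*ρ^3*x^2 + (8:ℝ)*a^2*b^2*ρ^2 + (-8:ℝ)*a^2*b^2*ρ^2*x + (-4:ℝ)*a^2*b^2*ρ^3 + (4:ℝ)*a^2*b^2*ρ^3*x + (24:ℝ)*a^2*b^3*ρ^2 + (8:ℝ)*a^2*b^3*ρ^2*t + (16:ℝ)*a^2*b^3*ρ^2*t^2 + (-16:ℝ)*a^2*b^3*ρ^2*s + (-24:ℝ)*a^2*b^3*ρ^2*s*t + (-16:ℝ)*a^2*b^3*ρ^2*s*t^2 + (80:ℝ)*a^2*b^3*ρ^2*s^2 + (16:ℝ)*a^2*b^3*ρ^2*s^2*t + (-32:ℝ)*a^2*b^3*ρ^2*s^3 + (-72:ℝ)*a^2*b^3*ρ^2*x + (-24:ℝ)*a^2*b^3*ρ^2*x*t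 + (-16:ℝ)*a^2*b^3*ρ^2*x*t^2 + (-40:ℝ)*a^2*b^3*ρ^2*x*s + (32:ℝ)*a^2*b^3*ρ^2*x*s*t + (-48:ℝ)*a^2*b^3*ρ^2*x*s^2 + (80:ℝ)*a^2*b^3*ρ^2*x^2 + (16:ℝ)*a^2*b^3*ρ^2*x^2*t + (48:ℝ)*a^2*b^3*ρ^2*x^2*s + (-32:ℝ)*a^2*b^3*ρ^2*x^3 + (-12:ℝ)*a^2*b^3*ρ^3 + (-4:ℝ)*a^2*b^3*ρ^3*t + (-8:ℝ)*a^2*b^3*ρ^3*t^2 + (8:ℝ)*a^2*b^3*ρ^3*s + (12:ℝ)*a^2*b^3*ρ^3*s*t + (8:ℝ)*a^2*b^3*ρ^3*s*t^2 + (-40:ℝ)*a^2*b^3*ρ^3*s^2 + (-8:ℝ)*a^2*b^3*ρ^3*s^2*t + (16:ℝ)*a^2*b^3*ρ^3*s^3 + (36:ℝ)*a^2*b^3*ρ^3*x + (12:ℝ)*a^2*b^3*ρ^3*x*t + (8:ℝ)*a^2*b^3*ρ^3*x*t^2 + (20:ℝ)*a^2*b^3*ρ^3*x*s + (-16:ℝ)*a^2*b^3*ρ^3*x*s*t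 + (24:ℝ)*a^2*b^3*ρ^3*x*s^2 + (-40:ℝ)*a^2*b^3*ρ^3*x^2 + (-8:ℝ)*a^2*b^3*ρ^3*x^2*t + (-24:ℝ)*a^2*b^3*ρ^3*x^2*s + (16:ℝ)*a^2*b^3*ρ^3*x^3 + (-24:ℝ)*a^2*b^4*ρ^2*s + (-8:ℝ)*a^2*b^4*ρ^2*s*t + (-16:ℝ)*a^2*b^4*ρ^2*s*t^2 + (64:ℝ)*a^2*b^4*ρ^2*s^2 + (40:ℝ)*a^2*b^4*ρ^2*s^2*t + (48:ℝ)*a^2*b^4*ρ^2*s^2*t^2 + (-32:ℝ)*a^2*b^4*ρ^2*s^3 + (-64:ℝ)*a^2*b^4*ρ^2*s^3*t + (-32:ℝ)*a^2*b^4*ρ^2*s^3*t^2 + (32:ℝ)*a^2*b^4*ρ^2*s^4*t + (-24:ℝ)*a^2*b^4*ρ^2*x + (-8:ℝ)*a^2*b^4*ρ^2*x*t + (-16:ℝ)*a^2*b^4*ρ^2*x*t^2 + (24:ℝ)*a^2*b^4*ρ^2*x*s + (32:ℝ)*a^2*b^4*ρ^2*x*s*t + (-176:ℝ)*a^2*b^4*ρ^2*x*s^2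 + (-48:ℝ)*a^2*b^4*ρ^2*x*s^2*t + (64:ℝ)*a^2*b^4*ρ^2*x*s^3 + (32:ℝ)*a^2*b^4*ρ^2*x*s^3*t + (112:ℝ)*a^2*b^4*ρ^2*x^2 + (40:ℝ)*a^2*b^4*ρ^2*x^2*t + (48:ℝ)*a^2*b^4*ρ^2*x^2*t^2 + (80:ℝ)*a^2*b^4*ρ^2*x^2*s + (-48:ℝ)*a^2*b^4*ρ^2*x^2*s*t + (176:ℝ)*a^2*b^4*ρ^2*x^2*s^2 + (-32:ℝ)*a^2*b^4*ρ^2*x^2*s^3 + (-184:ℝ)*a^2*b^4*ρ^2*x^3 + (-64:ℝ)*a^2*b^4*ρ^2*x^3*t + (-32:ℝ)*a^2*b^4*ρ^2*x^3*t^2 + (-144:ℝ)*a^2*b^4*ρ^2*x^3*s + (32:ℝ)*a^2*b^4*ρ^2*x^3*s*t + (-64:ℝ)*a^2*b^4*ρ^2*x^3*s^2 + (128:ℝ)*a^2*b^4*ρ^2*x^4 + (32:ℝ)*a^2*b^4*ρ^2*x^4*t + (64:ℝ)*a^2*b^4*ρ^2*x^4*s + (-32:ℝ)*a^2*b^4*ρ^2*x^5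 + (12:ℝ)*a^2*b^4*ρ^3*s + (4:ℝ)*a^2*b^4*ρ^3*s*t + (8:ℝ)*a^2*b^4*ρ^3*s*t^2 + (-32:ℝ)*a^2*b^4*ρ^3*s^2 + (-20:ℝ)*a^2*b^4*ρ^3*s^2*t + (-24:ℝ)*a^2*b^4*ρ^3*s^2*t^2 + (16:ℝ)*a^2*b^4*ρ^3*s^3 + (32:ℝ)*a^2*b^4*ρ^3*s^3*t + (16:ℝ)*a^2*b^4*ρ^3*s^3*t^2 + (-16:ℝ)*a^2*b^4*ρ^3*s^4*t + (12:ℝ)*a^2*b^4*ρ^3*x + (4:ℝ)*a^2*b^4*ρ^3*x*t + (8:ℝ)*a^2*b^4*ρ^3*x*t^2 + (-12:ℝ)*a^2*b^4*ρ^3*x*s + (-16:ℝ)*a^2*b^4*ρ^3*x*s*t + (88:ℝ)*a^2*b^4*ρ^3*x*s^2 + (24:ℝ)*a^2*b^4*ρ^3*x*s^2*t + (-32:ℝ)*a^2*b^4*ρ^3*x*s^3 + (-16:ℝ)*a^2*b^4*ρ^3*x*s^3*t + (-56:ℝ)*a^2*b^4*ρ^3*x^2 + (-20:ℝ)*a^2*b^4*ρ^3*x^2*t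 + (-24:ℝ)*a^2*b^4*ρ^3*x^2*t^2 + (-40:ℝ)*a^2*b^4*ρ^3*x^2*s + (24:ℝ)*a^2*b^4*ρ^3*x^2*s*t + (-88:ℝ)*a^2*b^4*ρ^3*x^2*s^2 + (16:ℝ)*a^2*b^4*ρ^3*x^2*s^3 + (92:ℝ)*a^2*b^4*ρ^3*x^3 + (32:ℝ)*a^2*b^4*ρ^3*x^3*t + (16:ℝ)*a^2*b^4*ρ^3*x^3*t^2 + (72:ℝ)*a^2*b^4*ρ^3*x^3*s + (-16:ℝ)*a^2*b^4*ρ^3*x^3*s*t + (32:ℝ)*a^2*b^4*ρ^3*x^3*s^2 + (-64:ℝ)*a^2*b^4*ρ^3*x^4 + (-16:ℝ)*a^2*b^4*ρ^3*x^4*t + (-32:ℝ)*a^2*b^4*ρ^3*x^4*s + (16:ℝ)*a^2*b^4*ρ^3*x^5 + (2:ℝ)*a^3*b^3*ρ^3 + (-4:ℝ)*a^3*b^3*ρ^3*x + (6:ℝ)*a^3*b^4*ρ^3 + (2:ℝ)*a^3*b^4*ρ^3*t + (4:ℝ)*a^3*b^4*ρ^3*t^2 + (-10:ℝ)*a^3*b^4*ρ^3*s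 + (-8:ℝ)*a^3*b^4*ρ^3*s*t + (-8:ℝ)*a^3*b^4*ρ^3*s*t^2 + (36:ℝ)*a^3*b^4*ρ^3*s^2 + (8:ℝ)*a^3*b^4*ρ^3*s^2*t + (-16:ℝ)*a^3*b^4*ρ^3*s^3 + (-26:ℝ)*a^3*b^4*ρ^3*x + (-8:ℝ)*a^3*b^4*ρ^3*x*t + (-8:ℝ)*a^3*b^4*ρ^3*x*t^2 + (8:ℝ)*a^3*b^4*ρ^3*x*s + (24:ℝ)*a^3*b^4*ρ^3*x*s*t + (16:ℝ)*a^3*b^4*ρ^3*x*s*t^2 + (-88:ℝ)*a^3*b^4*ρ^3*x*s^2 + (-16:ℝ)*a^3*b^4*ρ^3*x*s^2*t + (32:ℝ)*a^3*b^4*ρ^3*x*s^3 + (36:ℝ)*a^3*b^4*ρ^3*x^2 + (8:ℝ)*a^3*b^4*ρ^3*x^2*t + (40:ℝ)*a^3*b^4*ρ^3*x^2*s + (-16:ℝ)*a^3*b^4*ρ^3*x^2*s*t + (32:ℝ)*a^3*b^4*ρ^3*x^2*s^2 + (-16:ℝ)*a^3*b^4*ρ^3*x^3 + (-32:ℝ)*a^3*b^4*ρ^3*x^3*s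 + (-12:ℝ)*a^3*b^5*ρ^3*s + (-4:ℝ)*a^3*b^5*ρ^3*s*t + (-8:ℝ)*a^3*b^5*ρ^3*s*t^2 + (32:ℝ)*a^3*b^5*ρ^3*s^2 + (20:ℝ)*a^3*b^5*ρ^3*s^2*t + (24:ℝ)*a^3*b^5*ρ^3*s^2*t^2 + (-16:ℝ)*a^3*b^5*ρ^3*s^3 + (-32:ℝ)*a^3*b^5*ρ^3*s^3*t + (-16:ℝ)*a^3*b^5*ρ^3*s^3*t^2 + (16:ℝ)*a^3*b^5*ρ^3*s^4*t + (-12:ℝ)*a^3*b^5*ρ^3*x + (-4:ℝ)*a^3*b^5*ρ^3*x*t + (-8:ℝ)*a^3*b^5*ρ^3*x*t^2 + (60:ℝ)*a^3*b^5*ρ^3*x*s + (32:ℝ)*a^3*b^5*ρ^3*x*s*t + (32:ℝ)*a^3*b^5*ρ^3*x*s*t^2 + (-216:ℝ)*a^3*b^5*ρ^3*x*s^2 + (-80:ℝ)*a^3*b^5*ρ^3*x*s^2*t + (-48:ℝ)*a^3*b^5*ρ^3*x*s^2*t^2 + (96:ℝ)*a^3*b^5*ρ^3*x*s^3 + (80:ℝ)*a^3*b^5*ρ^3*x*s^3*t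 + (32:ℝ)*a^3*b^5*ρ^3*x*s^3*t^2 + (-32:ℝ)*a^3*b^5*ρ^3*x*s^4*t + (56:ℝ)*a^3*b^5*ρ^3*x^2 + (20:ℝ)*a^3*b^5*ρ^3*x^2*t + (24:ℝ)*a^3*b^5*ρ^3*x^2*t^2 + (-48:ℝ)*a^3*b^5*ρ^3*x^2*s + (-80:ℝ)*a^3*b^5*ρ^3*x^2*s*t + (-48:ℝ)*a^3*b^5*ρ^3*x^2*s*t^2 + (472:ℝ)*a^3*b^5*ρ^3*x^2*s^2 + (96:ℝ)*a^3*b^5*ρ^3*x^2*s^2*t + (-176:ℝ)*a^3*b^5*ρ^3*x^2*s^3 + (-32:ℝ)*a^3*b^5*ρ^3*x^2*s^3*t + (-92:ℝ)*a^3*b^5*ρ^3*x^3 + (-32:ℝ)*a^3*b^5*ρ^3*x^3*t + (-16:ℝ)*a^3*b^5*ρ^3*x^3*t^2 + (-144:ℝ)*a^3*b^5*ρ^3*x^3*s + (80:ℝ)*a^3*b^5*ρ^3*x^3*s*t + (32:ℝ)*a^3*b^5*ρ^3*x^3*s*t^2 + (-384:ℝ)*a^3*b^5*ρ^3*x^3*s^2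 + (-32:ℝ)*a^3*b^5*ρ^3*x^3*s^2*t + (96:ℝ)*a^3*b^5*ρ^3*x^3*s^3 + (64:ℝ)*a^3*b^5*ρ^3*x^4 + (16:ℝ)*a^3*b^5*ρ^3*x^4*t + (240:ℝ)*a^3*b^5*ρ^3*x^4*s + (-32:ℝ)*a^3*b^5*ρ^3*x^4*s*t + (96:ℝ)*a^3*b^5*ρ^3*x^4*s^2 + (-16:ℝ)*a^3*b^5*ρ^3*x^5 + (-96:ℝ)*a^3*b^5*ρ^3*x^5*s + (24:ℝ)*a^3*b^6*ρ^3*x*s + (8:ℝ)*a^3*b^6*ρ^3*x*s*t + (16:ℝ)*a^3*b^6*ρ^3*x*s*t^2 + (-64:ℝ)*a^3*b^6*ρ^3*x*s^2 + (-40:ℝ)*a^3*b^6*ρ^3*x*s^2*t + (-48:ℝ)*a^3*b^6*ρ^3*x*s^2*t^2 + (32:ℝ)*a^3*b^6*ρ^3*x*s^3 + (64:ℝ)*a^3*b^6*ρ^3*x*s^3*t + (32:ℝ)*a^3*b^6*ρ^3*x*s^3*t^2 + (-32:ℝ)*a^3*b^6*ρ^3*x*s^4*t + (-104:ℝ)*a^3*b^6*ρ^3*x^2*s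 + (-40:ℝ)*a^3*b^6*ρ^3*x^2*s*t + (-48:ℝ)*a^3*b^6*ρ^3*x^2*s*t^2 + (352:ℝ)*a^3*b^6*ρ^3*x^2*s^2 + (168:ℝ)*a^3*b^6*ρ^3*x^2*s^2*t + (144:ℝ)*a^3*b^6*ρ^3*x^2*s^2*t^2 + (-160:ℝ)*a^3*b^6*ρ^3*x^2*s^3 + (-224:ℝ)*a^3*b^6*ρ^3*x^2*s^3*t + (-96:ℝ)*a^3*b^6*ρ^3*x^2*s^3*t^2 + (96:ℝ)*a^3*b^6*ρ^3*x^2*s^4*t + (104:ℝ)*a^3*b^6*ρ^3*x^3*s + (64:ℝ)*a^3*b^6*ρ^3*x^3*s*t + (32:ℝ)*a^3*b^6*ρ^3*x^3*s*t^2 + (-736:ℝ)*a^3*b^6*ρ^3*x^3*s^2 + (-224:ℝ)*a^3*b^6*ρ^3*x^3*s^2*t + (-96:ℝ)*a^3*b^6*ρ^3*x^3*s^2*t^2 + (288:ℝ)*a^3*b^6*ρ^3*x^3*s^3 + (224:ℝ)*a^3*b^6*ρ^3*x^3*s^3*t + (64:ℝ)*a^3*b^6*ρ^3*x^3*s^3*t^2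 + (-64:ℝ)*a^3*b^6*ρ^3*x^3*s^4*t + (136:ℝ)*a^3*b^6*ρ^3*x^4*s + (-32:ℝ)*a^3*b^6*ρ^3*x^4*s*t + (736:ℝ)*a^3*b^6*ρ^3*x^4*s^2 + (96:ℝ)*a^3*b^6*ρ^3*x^4*s^2*t + (-224:ℝ)*a^3*b^6*ρ^3*x^4*s^3 + (-64:ℝ)*a^3*b^6*ρ^3*x^4*s^3*t + (-352:ℝ)*a^3*b^6*ρ^3*x^5*s + (-352:ℝ)*a^3*b^6*ρ^3*x^5*s^2 + (64:ℝ)*a^3*b^6*ρ^3*x^5*s^3 + (256:ℝ)*a^3*b^6*ρ^3*x^6*s + (64:ℝ)*a^3*b^6*ρ^3*x^6*s^2 + (-64:ℝ)*a^3*b^6*ρ^3*x^7*s) * hsum + ((-48:ℝ)*a*b*ρ + (48:ℝ)*a*b*ρ*x + (48:ℝ)*a*b*ρ^2 + (-48:ℝ)*a*b*ρ^2*x + (-12:ℝ)*a*b*ρ^3 + (12:ℝ)*a*b*ρ^3*x + (-8:ℝ)*a^2*b*ρ^2 + (4:ℝ)*a^2*b*ρ^3 + (-56:ℝ)*a^2*b^2*ρ^2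 + (152:ℝ)*a^2*b^2*ρ^2*x + (-96:ℝ)*a^2*b^2*ρ^2*x^2 + (28:ℝ)*a^2*b^2*ρ^3 + (-76:ℝ)*a^2*b^2*ρ^3*x + (48:ℝ)*a^2*b^2*ρ^3*x^2 + (48:ℝ)*a^2*b^3*ρ^2*s + (-152:ℝ)*a^2*b^3*ρ^2*s^2 + (128:ℝ)*a^2*b^3*ρ^2*s^3 + (-32:ℝ)*a^2*b^3*ρ^2*s^4 + (56:ℝ)*a^2*b^3*ρ^2*x + (8:ℝ)*a^2*b^3*ρ^2*x*s + (112:ℝ)*a^2*b^3*ρ^2*x*s^2 + (-64:ℝ)*a^2*b^3*ρ^2*x*s^3 + (-248:ℝ)*a^2*b^3*ρ^2*x^2 + (-80:ℝ)*a^2*b^3*ρ^2*x^2*s + (320:ℝ)*a^2*b^3*ρ^2*x^3 + (32:ℝ)*a^2*b^3*ρ^2*x^3*s + (-128:ℝ)*a^2*b^3*ρ^2*x^4 + (-24:ℝ)*a^2*b^3*ρ^3*s + (76:ℝ)*a^2*b^3*ρ^3*s^2 + (-64:ℝ)*a^2*b^3*ρ^3*s^3 + (16:ℝ)*a^2*b^3*ρ^3*s^4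 + (-28:ℝ)*a^2*b^3*ρ^3*x + (-4:ℝ)*a^2*b^3*ρ^3*x*s + (-56:ℝ)*a^2*b^3*ρ^3*x*s^2 + (32:ℝ)*a^2*b^3*ρ^3*x*s^3 + (124:ℝ)*a^2*b^3*ρ^3*x^2 + (40:ℝ)*a^2*b^3*ρ^3*x^2*s + (-160:ℝ)*a^2*b^3*ρ^3*x^3 + (-16:ℝ)*a^2*b^3*ρ^3*x^3*s + (64:ℝ)*a^2*b^3*ρ^3*x^4 + (-4:ℝ)*a^3*b^2*ρ^3 + (8:ℝ)*a^3*b^2*ρ^3*x + (-16:ℝ)*a^3*b^3*ρ^3 + (80:ℝ)*a^3*b^3*ρ^3*x + (-128:ℝ)*a^3*b^3*ρ^3*x^2 + (64:ℝ)*a^3*b^3*ρ^3*x^3 + (24:ℝ)*a^3*b^4*ρ^3*s + (-76:ℝ)*a^3*b^4*ρ^3*s^2 + (64:ℝ)*a^3*b^4*ρ^3*s^3 + (-16:ℝ)*a^3*b^4*ρ^3*s^4 + (36:ℝ)*a^3*b^4*ρ^3*x + (-44:ℝ)*a^3*b^4*ρ^3*x*s + (208:ℝ)*a^3*b^4*ρ^3*x*s^2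 + (-160:ℝ)*a^3*b^4*ρ^3*x*s^3 + (32:ℝ)*a^3*b^4*ρ^3*x*s^4 + (-212:ℝ)*a^3*b^4*ρ^3*x^2 + (-48:ℝ)*a^3*b^4*ρ^3*x^2*s + (-112:ℝ)*a^3*b^4*ρ^3*x^2*s^2 + (64:ℝ)*a^3*b^4*ρ^3*x^2*s^3 + (448:ℝ)*a^3*b^4*ρ^3*x^3 + (96:ℝ)*a^3*b^4*ρ^3*x^3*s + (-400:ℝ)*a^3*b^4*ρ^3*x^4 + (-32:ℝ)*a^3*b^4*ρ^3*x^4*s + (128:ℝ)*a^3*b^4*ρ^3*x^5 + (-48:ℝ)*a^3*b^5*ρ^3*x*s + (152:ℝ)*a^3*b^5*ρ^3*x*s^2 + (-128:ℝ)*a^3*b^5*ρ^3*x*s^3 + (32:ℝ)*a^3*b^5*ρ^3*x*s^4 + (-8:ℝ)*a^3*b^5*ρ^3*x^2 + (136:ℝ)*a^3*b^5*ρ^3*x^2*s + (-568:ℝ)*a^3*b^5*ρ^3*x^2*s^2 + (448:ℝ)*a^3*b^5*ρ^3*x^2*s^3 + (-96:ℝ)*a^3*b^5*ρ^3*x^2*s^4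 + (80:ℝ)*a^3*b^5*ρ^3*x^3 + (8:ℝ)*a^3*b^5*ρ^3*x^3*s + (640:ℝ)*a^3*b^5*ρ^3*x^3*s^2 + (-448:ℝ)*a^3*b^5*ρ^3*x^3*s^3 + (64:ℝ)*a^3*b^5*ρ^3*x^3*s^4 + (-264:ℝ)*a^3*b^5*ρ^3*x^4 + (-288:ℝ)*a^3*b^5*ρ^3*x^4*s + (-224:ℝ)*a^3*b^5*ρ^3*x^4*s^2 + (128:ℝ)*a^3*b^5*ρ^3*x^4*s^3 + (384:ℝ)*a^3*b^5*ρ^3*x^5 + (256:ℝ)*a^3*b^5*ρ^3*x^5*s + (-256:ℝ)*a^3*b^5*ρ^3*x^6 + (-64:ℝ)*a^3*b^5*ρ^3*x^6*s + (64:ℝ)*a^3*b^5*ρ^3*x^7) * hprod + ((-48:ℝ)*ρ + (-48:ℝ)*ρ^2 + (-28:ℝ)*ρ^3 + (-56:ℝ)*a*b*ρ^2 + (96:ℝ)*a*b*ρ^2*x + (28:ℝ)*a*b*ρ^3 + (16:ℝ)*a*b*ρ^3*x + (-8:ℝ)*a*b^2*ρ^2 + (96:ℝ)*a*b^2*ρ^2*x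 + (-192:ℝ)*a*b^2*ρ^2*x^2 + (96:ℝ)*a*b^2*ρ^2*x^3 + (-4:ℝ)*a*b^2*ρ^3 + (16:ℝ)*a*b^2*ρ^3*x + (-32:ℝ)*a*b^2*ρ^3*x^2 + (16:ℝ)*a*b^2*ρ^3*x^3 + (-8:ℝ)*a^2*b*ρ^3 + (-16:ℝ)*a^2*b^2*ρ^3 + (64:ℝ)*a^2*b^2*ρ^3*x + (-64:ℝ)*a^2*b^2*ρ^3*x^2 + (-4:ℝ)*a^2*b^3*ρ^3 + (72:ℝ)*a^2*b^3*ρ^3*x + (-256:ℝ)*a^2*b^3*ρ^3*x^2 + (320:ℝ)*a^2*b^3*ρ^3*x^3 + (-128:ℝ)*a^2*b^3*ρ^3*x^4 + (8:ℝ)*a^2*b^4*ρ^3*x + (-80:ℝ)*a^2*b^4*ρ^3*x^2 + (264:ℝ)*a^2*b^4*ρ^3*x^3 + (-384:ℝ)*a^2*b^4*ρ^3*x^4 + (256:ℝ)*a^2*b^4*ρ^3*x^5 + (-64:ℝ)*a^2*b^4*ρ^3*x^6) * hP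

omit hP in
theorem quad_factor_id (y : ℝ) : quadf b x y = b*(y-s)*(y-t) := by
  unfold quadf qqc at *
  linear_combination (b*y)*hsum - hprod

end Case2





theorem spec_mem (A B C : ℝ) (lam : ℂ) :
    lam ∈ spectrum ℂ (!![(A:ℂ), (B:ℂ); (C:ℂ), (A:ℂ)] : Matrix (Fin 2) (Fin 2) ℂ) ↔
      (lam - (A:ℂ))^2 = ((B*C : ℝ) : ℂ) := by
  rw [spectrum.mem_iff, Matrix.isUnit_iff_isUnit_det, isUnit_iff_ne_zero, not_ne_iff]
  have h : (algebraMap ℂ (Matrix (Fin 2) (Fin 2) ℂ) lam -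
      !![(A:ℂ), (B:ℂ); (C:ℂ), (A:ℂ)]) = !![lam - A, -B; -C, lam - A] := by
    ext i j
    fin_cases i <;> fin_cases j <;>
      simp [Matrix.algebraMap_matrix_apply, Matrix.one_apply]
  rw [h, Matrix.det_fin_two_of]
  push_cast
  constructor <;> intro h2 <;> linear_combination h2

theorem sqrt_lt_one' {u : ℝ} (h : u < 1) : Real.sqrt u < 1 := by
  rw [show (1:ℝ) = Real.sqrt 1 by simp]
  rcases le_or_gt u 0 with h0 | h0
  · have := Real.sqrt_eq_zero_of_nonpos h0
    simp [this]
  · exact Real.sqrt_lt_sqrt h0.le h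

theorem stab_iff (ρ t : ℝ) (hρ0 : 0 < ρ) (hρ1 : ρ ≤ 1) :
    (∀ lam : ℂ, (lam - ((1-ρ : ℝ):ℂ))^2 = ((t:ℝ):ℂ) → ‖lam‖ < 1) ↔
      (t < ρ^2 ∧ (1-ρ)^2 - t < 1) := by
  rcases le_or_gt 0 t with ht | ht
  · -- real eigenvalues
    have hs0 : 0 ≤ Real.sqrt t := Real.sqrt_nonneg t
    have hs2 : (Real.sqrt t)^2 = t := Real.sq_sqrt ht
    have hsq : ((Real.sqrt t : ℝ) : ℂ)^2 = ((t:ℝ):ℂ) := by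
      norm_cast
    constructor
    · intro H
      have h1 := H (((1-ρ) + Real.sqrt t : ℝ) : ℂ)
        (by push_cast; push_cast at hsq; linear_combination hsq)
      rw [Complex.norm_real, Real.norm_eq_abs] at h1
      have h2 : 1 - ρ + Real.sqrt t < 1 := (abs_lt.mp h1).2
      have h3 : Real.sqrt t < ρ := by linarith
      constructor
      · nlinarith
      · nlinarith
    · rintro ⟨h1, h2⟩ lam hlam
      have hfac : (lam - ((1-ρ:ℝ):ℂ) - ((Real.sqrt t : ℝ):ℂ)) *
          (lam - ((1-ρ:ℝ):ℂ) + ((Real.sqrt t : ℝ):ℂ)) = 0 := by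
        linear_combination hlam - hsq
      have hlt : Real.sqrt t < ρ := by nlinarith
      rcases mul_eq_zero.mp hfac with h | h
      · have hl : lam = (((1-ρ) + Real.sqrt t : ℝ) : ℂ) := by
          push_cast at h ⊢; linear_combination h
        rw [hl, Complex.norm_real, Real.norm_eq_abs, abs_lt]
        constructor <;> nlinarith
      · have hl : lam = (((1-ρ) - Real.sqrt t : ℝ) : ℂ) := by
          push_cast at h ⊢; linear_combination h
        rw [hl, Complex.norm_real, Real.norm_eq_abs, abs_lt]
        constructor <;> nlinarith
  · -- complex eigenvalues
    have hs0 : 0 ≤ Real.sqrt (-t) := Real.sqrt_nonneg (-t)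
    have hs2 : (Real.sqrt (-t))^2 = -t := Real.sq_sqrt (by linarith)
    have hw : (((Real.sqrt (-t) : ℝ):ℂ) * Complex.I)^2 = ((t:ℝ):ℂ) := by
      rw [mul_pow, Complex.I_sq]
      have : ((Real.sqrt (-t) : ℝ):ℂ)^2 = ((-t : ℝ):ℂ) := by norm_cast
      push_cast at this ⊢
      linear_combination -this
    have habs : ∀ s : ℝ, ‖((1-ρ:ℝ):ℂ) + ((s:ℝ):ℂ) * Complex.I‖
        = Real.sqrt ((1-ρ)^2 + s^2) := by
      intro s
      rw [Complex.norm_add_mul_I]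
    constructor
    · intro H
      have h1 := H (((1-ρ:ℝ):ℂ) + ((Real.sqrt (-t):ℝ):ℂ) * Complex.I)
        (by linear_combination hw)
      rw [habs] at h1
      have hnn : 0 ≤ (1-ρ)^2 + (Real.sqrt (-t))^2 := by positivity
      have h2 : (1-ρ)^2 + (Real.sqrt (-t))^2 < 1 := by
        nlinarith [Real.sq_sqrt hnn, Real.sqrt_nonneg ((1-ρ)^2 + (Real.sqrt (-t))^2)]
      constructor
      · nlinarith
      · nlinarith
    · rintro ⟨h1, h2⟩ lam hlam
      have hfac : (lam - ((1-ρ:ℝ):ℂ) - ((Real.sqrt (-t) : ℝ):ℂ) * Complex.I) *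
          (lam - ((1-ρ:ℝ):ℂ) + ((Real.sqrt (-t) : ℝ):ℂ) * Complex.I) = 0 := by
        linear_combination hlam - hw
      rcases mul_eq_zero.mp hfac with h | h
      · have hl : lam = ((1-ρ:ℝ):ℂ) + ((Real.sqrt (-t):ℝ):ℂ) * Complex.I := by
          linear_combination h
        rw [hl, habs]
        exact sqrt_lt_one' (by nlinarith)
      · have hl : lam = ((1-ρ:ℝ):ℂ) + ((-(Real.sqrt (-t)):ℝ):ℂ) * Complex.I := by
          push_cast at h ⊢; linear_combination h
        rw [hl, habs]
        exact sqrt_lt_one' (by nlinarith)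

theorem quad_roots {A B C : ℝ} (hA : 0 < A) (h : 0 < B^2 - 4*A*C) :
    ∃ s t : ℝ, s < t ∧ A*s^2 + B*s + C = 0 ∧ A*t^2 + B*t + C = 0 := by
  set d := Real.sqrt (B^2 - 4*A*C) with hd
  have hd2 : d^2 = B^2 - 4*A*C := Real.sq_sqrt h.le
  have hd0 : 0 < d := Real.sqrt_pos.mpr h
  refine ⟨(-B - d)/(2*A), (-B + d)/(2*A), ?_, ?_, ?_⟩
  · have h2A : (0:ℝ) < 2*A := by positivity
    rw [div_lt_div_iff₀ h2A h2A]
    nlinarith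
  · field_simp
    ring_nf
    nlinarith [hd2]
  · field_simp
    ring_nf
    nlinarith [hd2]


set_option maxHeartbeats 1000000



def Tset (a b ρ : ℝ) : Set ℝ :=
  {x | (0 < x ∧ x < 1) ∧ Pc a b x = 0 ∧ mf a b x < 1 ∧ 0 < 2 - ρ + ρ * mf a b x}

theorem roots_bound {a b w : ℝ} (ha : 0 < a) (hb : 0 < b) (hab : 1 < a*b)
    (hw : Pc a b w = 0) : 0 < w ∧ w < 1 := by
  unfold Pc at hw
  constructor
  · by_contra hc; push_neg at hc
    nlinarith [mul_pos ha hb, mul_nonneg (mul_nonneg (mul_nonneg ha.le hb.le) hb.le)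
      (mul_nonneg (neg_nonneg.mpr hc) (sq_nonneg w)),
      mul_nonneg (mul_nonneg (mul_nonneg ha.le hb.le) hb.le) (sq_nonneg w),
      mul_nonneg (mul_nonneg (mul_nonneg ha.le hb.le) (add_nonneg zero_le_one hb.le))
        (neg_nonneg.mpr hc)]
  · by_contra hc; push_neg at hc
    have key : -(a*b^2)*w^3 + 2*a*b^2*w^2 - a*b*(1+b)*w + (a*b-1)
        = a*b*(1-w)*(b*w^2 - b*w + 1) - 1 := by ring
    have hw0 : (0:ℝ) ≤ w := by linarith
    nlinarith [mul_pos ha hb, mul_nonneg (mul_nonneg (mul_pos ha hb).le (sub_nonneg.mpr hc))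
      (by nlinarith [mul_nonneg (mul_nonneg hb.le (sub_nonneg.mpr hc)) hw0] :
        (0:ℝ) ≤ b*w^2 - b*w + 1)]

theorem quadf_pos {b x : ℝ} (hb : 0 < b) (hD : Dc b x < 0) (y : ℝ) : 0 < quadf b x y := by
  have key : 4*b*(quadf b x y) = (2*b*y + b*(x-2))^2 - Dc b x := by
    unfold quadf Dc qqc; ring
  nlinarith [sq_nonneg (2*b*y + b*(x-2))]

theorem exists_root {a b : ℝ} (hb : 0 < b) (hab : 1 < a*b) :
    ∃ x, 0 < x ∧ x < 1 ∧ Pc a b x = 0 := by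
  have hc : ContinuousOn (fun x => Pc a b x) (Set.Icc 0 1) := by
    apply Continuous.continuousOn
    unfold Pc; fun_prop
  have hmem : (0:ℝ) ∈ Set.Ioo (Pc a b 1) (Pc a b 0) := by
    constructor
    · show Pc a b 1 < 0
      unfold Pc; nlinarith
    · show (0:ℝ) < Pc a b 0
      unfold Pc; nlinarith
  obtain ⟨x, hx, hPx⟩ := intermediate_value_Ioo' zero_le_one hc hmem
  exact ⟨x, hx.1, hx.2, hPx⟩

theorem case1 {a b ρ : ℝ} (ha : 0 < a) (hb : 0 < b) (hρ0 : 0 < ρ) (hab : 1 < a*b)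
    (hR : R1c a b < 0) (hH : 0 < H3c a b ρ) : ∃ w, Tset a b ρ = {w} := by
  obtain ⟨x, hx0, hx1, hP⟩ := exists_root hb hab
  have hdisc := disc_id hP
  have hD : Dc b x < 0 := by
    by_contra hc; push_neg at hc
    linarith [mul_nonneg (mul_nonneg (sq_nonneg a) (sq_nonneg (quadf b x x))) hc, hdisc, hR]
  have hqpos := quadf_pos hb hD
  have hm : mf a b x < 1 := by
    have h1 := c1a_id hP
    linarith [h1, mul_pos (mul_pos (mul_pos ha hb) hx0) (hqpos x)]
  have hG : 0 < 2 - ρ + ρ * mf a b x := by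
    have hid := c1b_id (ρ := ρ) hP
    have hsos := sos_id a b ρ x
    have hphi : 0 ≤ Phic a b ρ x := by
      by_contra hc; push_neg at hc
      linarith [hsos, sq_nonneg (S1c a b ρ x),
        mul_nonneg (by linarith : (0:ℝ) ≤ -(Dc b x)) (sq_nonneg (S2c a b ρ x)),
        mul_pos (pow_pos hb 5) (by linarith : (0:ℝ) < -(Phic a b ρ x))]
    have hb3 : 0 < b^3 * H3c a b ρ := by positivity
    by_contra hc; push_neg at hc
    linarith [hid, hb3, mul_nonneg (by linarith : (0:ℝ) ≤ -(2 - ρ + ρ * mf a b x)) hphi]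
  refine ⟨x, ?_⟩
  ext z
  simp only [Tset, Set.mem_setOf_eq, Set.mem_singleton_iff]
  constructor
  · rintro ⟨-, hz, -, -⟩
    have hfz := factor_id hP z
    rw [hz] at hfz
    have h1 : -(a*b)*(z-x) = 0 := by
      rcases mul_eq_zero.mp hfz.symm with h | h
      · exact h
      · exact absurd h (ne_of_gt (hqpos z))
    have hab0 : a*b ≠ 0 := by positivity
    have : z - x = 0 := by
      rcases mul_eq_zero.mp h1 with h | h
      · exact absurd (neg_eq_zero.mp h) hab0
      · exact h
    linarith [this]
  · rintro rfl
    exact ⟨⟨hx0, hx1⟩, hP, hm, hG⟩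

theorem case2 {a b ρ : ℝ} (ha : 0 < a) (hb : 0 < b) (hρ0 : 0 < ρ) (hab : 1 < a*b)
    (hR : 0 < R1c a b) (hH : H3c a b ρ < 0) : ∃ w, Tset a b ρ = {w} := by
  obtain ⟨x, hx0, hx1, hP⟩ := exists_root hb hab
  have hdisc := disc_id hP
  have hN : quadf b x x ≠ 0 := by
    intro h; rw [h] at hdisc; simp at hdisc; linarith
  have hD : 0 < Dc b x := by
    rcases lt_trichotomy (Dc b x) 0 with hc | hc | hc
    · linarith [mul_nonneg (mul_nonneg (sq_nonneg a) (sq_nonneg (quadf b x x)))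
        (by linarith : (0:ℝ) ≤ -(Dc b x)), hdisc, hR]
    · rw [hc] at hdisc; simp at hdisc; linarith
    · exact hc
  obtain ⟨s, t, hst, hqs, hqt⟩ := quad_roots hb (by
    have h9 : (b*(x-2))^2 - 4*b*(qqc b x) = Dc b x := by unfold Dc; ring
    rw [h9]; exact hD)
  have hqs' : quadf b x s = 0 := by unfold quadf; linarith [hqs]
  have hqt' : quadf b x t = 0 := by unfold quadf; linarith [hqt]
  have hsum : s + t = 2 - x := by
    have hdiff : (s - t) * (b*(s+t) + b*(x-2)) = 0 := by
      unfold quadf at hqs' hqt'; linear_combination hqs' - hqt'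
    have hst0 : s - t ≠ 0 := by intro h9; apply absurd hst; push_neg; linarith [h9]
    have h2 : b*(s+t) + b*(x-2) = 0 := by
      rcases mul_eq_zero.mp hdiff with h9 | h9
      · exact absurd h9 hst0
      · exact h9
    have h3 : b * (s + t + x - 2) = 0 := by linarith [h2]
    rcases mul_eq_zero.mp h3 with h9 | h9
    · exact absurd h9 (ne_of_gt hb)
    · linarith
  have hprod : b*s*t = qqc b x := by
    unfold quadf at hqs'
    linear_combination (b*s)*hsum - hqs'
  have hfact : ∀ z, Pc a b z = -(a*b^2)*(z-x)*(z-s)*(z-t) := by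
    intro z
    have h1 := factor_id hP z
    have h2 := quad_factor_id hsum hprod z
    rw [h1, h2]; ring
  have hPs : Pc a b s = 0 := by rw [hfact s]; ring
  have hPt : Pc a b t = 0 := by rw [hfact t]; ring
  obtain ⟨hs0, hs1⟩ := roots_bound ha hb hab hPs
  obtain ⟨ht0, ht1⟩ := roots_bound ha hb hab hPt
  have hxs : x ≠ s := by
    intro h9; apply hN; subst h9; exact hqs'
  have hxt : x ≠ t := by
    intro h9; apply hN; subst h9; exact hqt'
  have hmx := c2a_id hP hsum hprod
  have hms := c2b_id hP hsum hprod
  have hmt := c2c_id hP hsum hprod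
  have hGGG := c2d_id (ρ := ρ) hP hsum hprod
  have hroots : ∀ z, Pc a b z = 0 → z = x ∨ z = s ∨ z = t := by
    intro z hz
    have h1 := hfact z
    rw [hz] at h1
    have habs : (a*b^2) ≠ 0 := by positivity
    rcases mul_eq_zero.mp h1.symm with h9 | h9
    · rcases mul_eq_zero.mp h9 with h8 | h8
      · rcases mul_eq_zero.mp h8 with h7 | h7
        · exact absurd (neg_eq_zero.mp h7) habs
        · left; linarith [sub_eq_zero.mp h7]
      · right; left; linarith [sub_eq_zero.mp h8]
    · right; right; linarith [sub_eq_zero.mp h9]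
  obtain ⟨Gx, hGx⟩ : ∃ g : ℝ, g = 2 - ρ + ρ * mf a b x := ⟨_, rfl⟩
  obtain ⟨Gs, hGs⟩ : ∃ g : ℝ, g = 2 - ρ + ρ * mf a b s := ⟨_, rfl⟩
  obtain ⟨Gt, hGt⟩ : ∃ g : ℝ, g = 2 - ρ + ρ * mf a b t := ⟨_, rfl⟩
  rw [← hGx, ← hGs, ← hGt] at hGGG
  have hab2 : 0 < a*b^2 := by positivity
  have main : ∀ u v w : ℝ, (0 < u ∧ u < 1) → (0 < w ∧ w < 1) → Pc a b u = 0 →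
      Pc a b v = 0 → Pc a b w = 0 → mf a b u < 1 → 1 < mf a b v → mf a b w < 1 →
      (∀ z, Pc a b z = 0 → z = u ∨ z = v ∨ z = w) →
      H3c a b ρ = (2 - ρ + ρ * mf a b u) * ((2 - ρ + ρ * mf a b v) * (2 - ρ + ρ * mf a b w)) →
      ∃ r, Tset a b ρ = {r} := by
    intro u v w hu hw hPu hPv hPw hmu hmv hmw hrts hid
    obtain ⟨Gu, hGu⟩ : ∃ g : ℝ, g = 2 - ρ + ρ * mf a b u := ⟨_, rfl⟩
    obtain ⟨Gv, hGv⟩ : ∃ g : ℝ, g = 2 - ρ + ρ * mf a b v := ⟨_, rfl⟩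
    obtain ⟨Gw, hGw⟩ : ∃ g : ℝ, g = 2 - ρ + ρ * mf a b w := ⟨_, rfl⟩
    rw [← hGu, ← hGv, ← hGw] at hid
    have hGv0 : 0 < Gv := by
      rw [hGv]; linarith [mul_lt_mul_of_pos_left hmv hρ0]
    have hout : Gu * Gw < 0 := by
      by_contra hcon; push_neg at hcon
      linarith [mul_nonneg hcon hGv0.le, hid, hH]
    rcases lt_trichotomy Gu 0 with hc | hc | hc
    · have hGw0 : 0 < Gw := by
        by_contra hcon; push_neg at hcon
        linarith [mul_nonneg (neg_nonneg.mpr hc.le) (neg_nonneg.mpr hcon), hout]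
      refine ⟨w, ?_⟩
      ext z
      simp only [Tset, Set.mem_setOf_eq, Set.mem_singleton_iff]
      constructor
      · rintro ⟨-, hz, hm1, hG1⟩
        rcases hrts z hz with rfl | rfl | rfl
        · rw [← hGu] at hG1; linarith
        · linarith
        · rfl
      · rintro rfl
        exact ⟨hw, hPw, hmw, hGw ▸ hGw0⟩
    · exact absurd (by rw [hc]; ring) (ne_of_lt hout)
    · have hGw0 : Gw < 0 := by
        by_contra hcon; push_neg at hcon
        linarith [mul_nonneg hc.le hcon, hout]
      refine ⟨u, ?_⟩
      ext z
      simp only [Tset, Set.mem_setOf_eq, Set.mem_singleton_iff]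
      constructor
      · rintro ⟨-, hz, hm1, hG1⟩
        rcases hrts z hz with rfl | rfl | rfl
        · rfl
        · linarith
        · rw [← hGw] at hG1; linarith
      · rintro rfl
        exact ⟨hu, hPu, hmu, hGu ▸ hc⟩
  rcases lt_trichotomy x s with hord | hord | hord
  · -- x < s < t : middle = s
    have hmv : 1 < mf a b s := by
      linarith [hms, mul_pos (mul_pos (mul_pos hab2 hs0) (sub_pos.mpr hord)) (sub_pos.mpr hst)]
    have hmu : mf a b x < 1 := by
      linarith [hmx, mul_pos (mul_pos (mul_pos hab2 hx0) (sub_pos.mpr hord))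
        (sub_pos.mpr (lt_trans hord hst))]
    have hmw : mf a b t < 1 := by
      linarith [hmt, mul_pos (mul_pos (mul_pos hab2 ht0) (sub_pos.mpr (lt_trans hord hst)))
        (sub_pos.mpr hst)]
    exact main x s t ⟨hx0, hx1⟩ ⟨ht0, ht1⟩ hP hPs hPt hmu hmv hmw hroots
      (by rw [hGx, hGs, hGt] at hGGG; linear_combination hGGG)
  · exact absurd hord hxs
  · rcases lt_trichotomy x t with hord2 | hord2 | hord2
    · -- s < x < t : middle = x
      have hmv : 1 < mf a b x := by
        linarith [hmx, mul_pos (mul_pos (mul_pos hab2 hx0) (sub_pos.mpr hord)) (sub_pos.mpr hord2)]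
      have hmu : mf a b s < 1 := by
        linarith [hms, mul_pos (mul_pos (mul_pos hab2 hs0) (sub_pos.mpr hord)) (sub_pos.mpr hst)]
      have hmw : mf a b t < 1 := by
        linarith [hmt, mul_pos (mul_pos (mul_pos hab2 ht0) (sub_pos.mpr hord2)) (sub_pos.mpr hst)]
      have hrts2 : ∀ z, Pc a b z = 0 → z = s ∨ z = x ∨ z = t := by
        intro z hz; rcases hroots z hz with h9 | h9 | h9
        · right; left; exact h9
        · left; exact h9
        · right; right; exact h9
      exact main s x t ⟨hs0, hs1⟩ ⟨ht0, ht1⟩ hPs hP hPt hmu hmv hmw hrts2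
        (by rw [hGx, hGs, hGt] at hGGG; linear_combination hGGG)
    · exact absurd hord2 hxt
    · -- s < t < x : middle = t
      have hmv : 1 < mf a b t := by
        linarith [hmt, mul_pos (mul_pos (mul_pos hab2 ht0) (sub_pos.mpr hord2)) (sub_pos.mpr hst)]
      have hmu : mf a b s < 1 := by
        linarith [hms, mul_pos (mul_pos (mul_pos hab2 hs0) (sub_pos.mpr (lt_trans hst hord2)))
          (sub_pos.mpr hst)]
      have hmw : mf a b x < 1 := by
        linarith [hmx, mul_pos (mul_pos (mul_pos hab2 hx0) (sub_pos.mpr hord2))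
          (sub_pos.mpr (lt_trans hst hord2))]
      have hrts2 : ∀ z, Pc a b z = 0 → z = s ∨ z = t ∨ z = x := by
        intro z hz; rcases hroots z hz with h9 | h9 | h9
        · right; right; exact h9
        · left; exact h9
        · right; left; exact h9
      exact main s t x ⟨hs0, hs1⟩ ⟨hx0, hx1⟩ hPs hPt hP hmu hmv hmw hrts2
        (by rw [hGx, hGs, hGt] at hGGG; linear_combination hGGG)


end KopelAux

open KopelAux in
/-- Case `ρ₁ = ρ₂ = ρ ∈ (0,1]`: if `μ₁ μ₂ > 1`, and either (`R₁ < 0` and `H₃ > 0`) or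
(`R₁ > 0` and `H₃ < 0`), then Kopel's model has exactly one stable positive
equilibrium. -/
theorem kopel_one_stable_positive_equilibrium_adaptive (ρ μ₁ μ₂ : ℝ)
    (hρ : ρ ∈ Set.Ioc (0 : ℝ) 1) (hμ₁ : 0 < μ₁) (hμ₂ : 0 < μ₂)
    (h : (1 < μ₁ * μ₂ ∧
          μ₁ ^ 2 * μ₂ ^ 2 - 4 * μ₁ ^ 2 * μ₂ - 4 * μ₁ * μ₂ ^ 2 + 18 * μ₁ * μ₂ - 27 < 0 ∧
          0 < ρ ^ 3 * μ₁ ^ 3 * μ₂ ^ 3 - 4 * ρ ^ 3 * μ₁ ^ 3 * μ₂ ^ 2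
            - 4 * ρ ^ 3 * μ₁ ^ 2 * μ₂ ^ 3 + 17 * ρ ^ 3 * μ₁ ^ 2 * μ₂ ^ 2
            + 4 * ρ ^ 3 * μ₁ ^ 2 * μ₂ + 4 * ρ ^ 3 * μ₁ * μ₂ ^ 2
            - 2 * ρ ^ 2 * μ₁ ^ 2 * μ₂ ^ 2 - 45 * ρ ^ 3 * μ₁ * μ₂
            + 8 * ρ ^ 2 * μ₁ ^ 2 * μ₂ + 8 * ρ ^ 2 * μ₁ * μ₂ ^ 2
            - 36 * ρ ^ 2 * μ₁ * μ₂ + 27 * ρ ^ 3 - 4 * ρ * μ₁ * μ₂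
            + 54 * ρ ^ 2 + 36 * ρ + 8) ∨
        (1 < μ₁ * μ₂ ∧
          0 < μ₁ ^ 2 * μ₂ ^ 2 - 4 * μ₁ ^ 2 * μ₂ - 4 * μ₁ * μ₂ ^ 2 + 18 * μ₁ * μ₂ - 27 ∧
          ρ ^ 3 * μ₁ ^ 3 * μ₂ ^ 3 - 4 * ρ ^ 3 * μ₁ ^ 3 * μ₂ ^ 2
            - 4 * ρ ^ 3 * μ₁ ^ 2 * μ₂ ^ 3 + 17 * ρ ^ 3 * μ₁ ^ 2 * μ₂ ^ 2
            + 4 * ρ ^ 3 * μ₁ ^ 2 * μ₂ + 4 * ρ ^ 3 * μ₁ * μ₂ ^ 2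
            - 2 * ρ ^ 2 * μ₁ ^ 2 * μ₂ ^ 2 - 45 * ρ ^ 3 * μ₁ * μ₂
            + 8 * ρ ^ 2 * μ₁ ^ 2 * μ₂ + 8 * ρ ^ 2 * μ₁ * μ₂ ^ 2
            - 36 * ρ ^ 2 * μ₁ * μ₂ + 27 * ρ ^ 3 - 4 * ρ * μ₁ * μ₂
            + 54 * ρ ^ 2 + 36 * ρ + 8 < 0)) :
    ({p : ℝ × ℝ | p.1 = μ₁ * p.2 * (1 - p.2) ∧ p.2 = μ₂ * p.1 * (1 - p.1) ∧
        0 < p.1 ∧ 0 < p.2 ∧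
        ∀ lam ∈ spectrum ℂ
          (!![((1 - ρ : ℝ) : ℂ), ((ρ * μ₁ * (1 - 2 * p.2) : ℝ) : ℂ);
              ((ρ * μ₂ * (1 - 2 * p.1) : ℝ) : ℂ), ((1 - ρ : ℝ) : ℂ)] :
            Matrix (Fin 2) (Fin 2) ℂ),
          ‖lam‖ < 1}).ncard = 1 := by
  obtain ⟨hρ0, hρ1⟩ := hρ
  have hρ2 : (0:ℝ) < ρ^2 := by positivity
  have hT : ∃ w, Tset μ₁ μ₂ ρ = {w} := by
    rcases h with ⟨h1, h2, h3⟩ | ⟨h1, h2, h3⟩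
    · exact case1 hμ₁ hμ₂ hρ0 h1 (by unfold R1c; linarith) (by unfold H3c; linarith)
    · exact case2 hμ₁ hμ₂ hρ0 h1 (by unfold R1c; linarith) (by unfold H3c; linarith)
  obtain ⟨w, hw⟩ := hT
  have hab : 1 < μ₁ * μ₂ := by rcases h with ⟨h1, -, -⟩ | ⟨h1, -, -⟩ <;> exact h1
  have hS : {p : ℝ × ℝ | p.1 = μ₁ * p.2 * (1 - p.2) ∧ p.2 = μ₂ * p.1 * (1 - p.1) ∧
        0 < p.1 ∧ 0 < p.2 ∧
        ∀ lam ∈ spectrum ℂ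
          (!![((1 - ρ : ℝ) : ℂ), ((ρ * μ₁ * (1 - 2 * p.2) : ℝ) : ℂ);
              ((ρ * μ₂ * (1 - 2 * p.1) : ℝ) : ℂ), ((1 - ρ : ℝ) : ℂ)] :
            Matrix (Fin 2) (Fin 2) ℂ),
          ‖lam‖ < 1}
      = (fun x : ℝ => (x, μ₂ * x * (1 - x))) '' (Tset μ₁ μ₂ ρ) := by
    ext p
    simp only [Set.mem_setOf_eq, Set.mem_image, Tset]
    constructor
    · rintro ⟨h1, h2, hx0, hy0, hs⟩
      have hx1 : p.1 < 1 := by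
        by_contra hc; push_neg at hc
        have h9 : μ₂ * p.1 * (1 - p.1) ≤ 0 :=
          mul_nonpos_of_nonneg_of_nonpos (mul_pos hμ₂ hx0).le (by linarith)
        linarith [h2, hy0]
      have hxP : p.1 * Pc μ₁ μ₂ p.1 = 0 := by
        unfold Pc
        linear_combination (-1 : ℝ) * h1 + (-μ₁*(1 - p.2 - μ₂*p.1*(1-p.1))) * h2
      have hPx : Pc μ₁ μ₂ p.1 = 0 := by
        rcases mul_eq_zero.mp hxP with h9 | h9
        · exact absurd h9 (ne_of_gt hx0)
        · exact h9
      have hstab := (stab_iff ρ ((ρ * μ₁ * (1 - 2 * p.2)) * (ρ * μ₂ * (1 - 2 * p.1))) hρ0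
        hρ1).mp (fun lam hl => hs lam
          ((spec_mem (1-ρ) (ρ * μ₁ * (1 - 2 * p.2)) (ρ * μ₂ * (1 - 2 * p.1)) lam).mpr hl))
      have key : (ρ * μ₁ * (1 - 2 * p.2)) * (ρ * μ₂ * (1 - 2 * p.1))
          = ρ^2 * mf μ₁ μ₂ p.1 := by
        unfold mf
        linear_combination (-2*ρ^2*μ₁*μ₂*(1 - 2*p.1)) * h2
      obtain ⟨hc1, hc2⟩ := hstab
      rw [key] at hc1 hc2
      have hm1 : mf μ₁ μ₂ p.1 < 1 := by
        have h9 : ρ^2 * mf μ₁ μ₂ p.1 < ρ^2 * 1 := by linarith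
        exact (mul_lt_mul_iff_right₀ hρ2).mp h9
      have hG1 : 0 < 2 - ρ + ρ * mf μ₁ μ₂ p.1 := by
        have h9 : 0 < ρ * (2 - ρ + ρ * mf μ₁ μ₂ p.1) := by nlinarith
        by_contra hc; push_neg at hc
        nlinarith [mul_nonneg hρ0.le (neg_nonneg.mpr hc)]
      refine ⟨p.1, ⟨⟨hx0, hx1⟩, hPx, hm1, hG1⟩, ?_⟩
      exact Prod.ext rfl h2.symm
    · rintro ⟨x, ⟨⟨hx0, hx1⟩, hPx, hm1, hG1⟩, rfl⟩
      refine ⟨?_, by ring, hx0, ?_, ?_⟩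
      · show x = μ₁ * (μ₂ * x * (1 - x)) * (1 - μ₂ * x * (1 - x))
        unfold Pc at hPx
        linear_combination (-x) * hPx
      · show (0:ℝ) < μ₂ * x * (1 - x)
        exact mul_pos (mul_pos hμ₂ hx0) (by linarith)
      · intro lam hl
        have key : (ρ * μ₁ * (1 - 2 * (μ₂ * x * (1 - x)))) * (ρ * μ₂ * (1 - 2 * x))
            = ρ^2 * mf μ₁ μ₂ x := by
          unfold mf; ring
        refine (stab_iff ρ ((ρ * μ₁ * (1 - 2 * (μ₂ * x * (1 - x)))) * (ρ * μ₂ * (1 - 2 * x)))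
          hρ0 hρ1).mpr ⟨?_, ?_⟩ lam
          ((spec_mem (1-ρ) _ _ lam).mp hl)
        · rw [key]
          have h9 : ρ^2 * mf μ₁ μ₂ x < ρ^2 * 1 := (mul_lt_mul_iff_right₀ hρ2).mpr hm1
          linarith
        · rw [key]
          nlinarith [mul_pos hρ0 hG1]
  rw [hS, hw, Set.image_singleton, Set.ncard_singleton]
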